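/- Let (G, X) be a universal minimal coalescent flow for a topological group G, and suppose for every t ≠ e the set {a(t) : a ∈ Aut(G)} is dense in G ∖ {e}. If there exists τ ∈ G such that τ x ≠ x for all x ∈ X (the action is free at τ), then the action is free at every t ≠ e, i.e., (G,X) is a free flow. -/

import Mathlib

universe u v

def IsMinimalFlow (G X : Type*) [Group G] [TopologicalSpace X] [MulAction G X] : Prop :=
  ∀ x : X, Dense (Set.range fun g : G => g • x)

def IsTopAut {G : Type*} [Group G] [TopologicalSpace G] (a : G ≃* G) : Prop :=
  Continuous a ∧ Continuous a.symm

def autOrbit (G : Type*) [Group G] [TopologicalSpace G] (t : G) : Set G :=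
  {g : G | ∃ a : G ≃* G, IsTopAut a ∧ a t = g}

theorem universal_minimal_free_at_one_point_implies_free
    (G : Type u) (X : Type v) [Group G] [TopologicalSpace G] [IsTopologicalGroup G]
    [TopologicalSpace X] [CompactSpace X] [T2Space X]
    [MulAction G X] [ContinuousSMul G X]
    (hmin : IsMinimalFlow G X)
    -- universality: every minimal G-flow is a factor of (G, X)
    (huniv : ∀ (Y : Type v) [TopologicalSpace Y] [CompactSpace Y] [T2Space Y]
      [MulAction G Y] [ContinuousSMul G Y], IsMinimalFlow G Y →
      ∃ f : X → Y, Continuous f ∧ Function.Surjective f ∧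
        ∀ (g : G) (x : X), f (g • x) = g • f x)
    -- coalescence
    (hcoal : ∀ f : X → X, Continuous f → (∀ (g : G) (x : X), f (g • x) = g • f x) →
      Function.Bijective f)
    -- each topological automorphism of G induces a homeomorphism of X
    (hat : ∀ a : G ≃* G, IsTopAut a →
      ∃ h : X ≃ₜ X, ∀ (s : G) (x : X), h (s • x) = a s • h x)
    -- the Aut(G)-orbit of every nonidentity element is dense in G \ {e}
    (hdense : ∀ t : G, t ≠ 1 → {g : G | g ≠ 1} ⊆ closure (autOrbit G t))
    -- the action is free at some τ
    (hτ : ∃ τ : G, ∀ x : X, τ • x ≠ x) :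
    ∀ t : G, t ≠ 1 → ∀ x : X, t • x ≠ x := by
  -- S : elements of G having a fixed point in X
  set S : Set G := {t : G | ∃ x : X, t • x = x} with hS
  have hSclosed : IsClosed S := by
    have h1 : IsClosed {p : X × G | p.2 • p.1 = p.1} := by
      apply isClosed_eq
      · exact continuous_snd.smul continuous_fst
      · exact continuous_fst
    have h2 : IsClosed (Prod.snd '' {p : X × G | p.2 • p.1 = p.1}) :=
      isClosedMap_snd_of_compactSpace _ h1
    convert h2 using 1
    ext t
    constructor
    · rintro ⟨x, hx⟩; exact ⟨(x, t), hx, rfl⟩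
    · rintro ⟨⟨x, t'⟩, hx, rfl⟩; exact ⟨x, hx⟩
  intro t ht x hx
  obtain ⟨τ, hτ⟩ := hτ
  have hτ1 : τ ≠ 1 := by
    intro h; exact hτ x (by simp [h])
  -- autOrbit G t ⊆ S
  have horb : autOrbit G t ⊆ S := by
    rintro g ⟨a, ha, rfl⟩
    obtain ⟨h, hh⟩ := hat a ha
    exact ⟨h x, by rw [← hh, hx]⟩
  have hsub : closure (autOrbit G t) ⊆ S := hSclosed.closure_subset_iff.mpr horb
  have : τ ∈ S := hsub (hdense t ht hτ1)
  obtain ⟨y, hy⟩ := this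
  exact hτ y hy
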